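/- Let f be a consensus (location) function on the n-cube Q_n. Then f equals the anti-median function AM if and only if f satisfies the Translation property (T), the Minority property (Min), and the Restricted Range property (RR). -/
import Mathlib


/-- A vertex of the n-cube `Q_n`: an element of `{0,1}^n`. -/
abbrev Vertex (n : ℕ) := Fin n → Bool

/-- Coordinatewise addition modulo 2 (`u ⊕ v`). -/
def vxor {n : ℕ} (u v : Vertex n) : Vertex n := fun i => xor (u i) (v i)

/-- A profile: a nonempty finite sequence of vertices of `Q_n`. -/
def Profile (n : ℕ) := { l : List (Vertex n) // l ≠ [] }

/-- Translation of a profile: `π ⊕ v = (x₁ ⊕ v, …, x_k ⊕ v)`. -/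
def pxor {n : ℕ} (π : Profile n) (v : Vertex n) : Profile n :=
  ⟨π.1.map (fun x => vxor x v), by simpa using π.2⟩

/-- The Translation property (T) for a consensus function. -/
def Translation {n : ℕ} (f : Profile n → Set (Vertex n)) : Prop :=
  ∀ (π : Profile n) (u v : Vertex n), u ∈ f π → vxor u v ∈ f (pxor π v)

/-- Hamming distance on the n-cube. -/
def cubeDist {n : ℕ} (u v : Vertex n) : ℕ := hammingDist u v

/-- The all-zeros vertex `𝟎`. -/
def zeroV (n : ℕ) : Vertex n := fun _ => false

/-- `‖u‖ = d(𝟎,u)`, the number of ones in `u`. -/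
def vnorm {n : ℕ} (u : Vertex n) : ℕ := cubeDist (zeroV n) u

/-- `‖π‖ = max{‖x₁‖,…,‖x_k‖}`. -/
def pnorm {n : ℕ} (π : Profile n) : ℕ := (π.1.map vnorm).foldr max 0

/-- Eccentricity `e(x, π) = max_j d(x, x_j)`. -/
def ecc {n : ℕ} (π : Profile n) (x : Vertex n) : ℕ :=
  (π.1.map (fun y => cubeDist x y)).foldr max 0

/-- The center function. -/
def Cen {n : ℕ} (π : Profile n) : Set (Vertex n) :=
  {x | ∀ y : Vertex n, ecc π x ≤ ecc π y}

/-- Status `S_π(x) = Σ_j d(x, x_j)`. -/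
def status {n : ℕ} (π : Profile n) (x : Vertex n) : ℕ :=
  (π.1.map (fun y => cubeDist x y)).sum

/-- The median function. -/
def Med {n : ℕ} (π : Profile n) : Set (Vertex n) :=
  {x | ∀ y : Vertex n, status π x ≤ status π y}

/-- The anti-median function. -/
def AM {n : ℕ} (π : Profile n) : Set (Vertex n) :=
  {x | ∀ y : Vertex n, status π y ≤ status π x}

/-- `Σ_{j=1}^k xᵢ^j`: the number of profile entries with a 1 in coordinate `i`. -/
def cnt {n : ℕ} (π : Profile n) (i : Fin n) : ℕ :=
  (π.1.map (fun x => if x i then 1 else 0)).sum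

/-- The majority vertex `Maj(π)`: `wᵢ = 1` iff `Σ_j xᵢ^j > k/2`. -/
def Maj {n : ℕ} (π : Profile n) : Vertex n :=
  fun i => decide (π.1.length < 2 * cnt π i)

/-- The minority vertex `Min(π)`: `mᵢ = 1` iff `Σ_j xᵢ^j < k/2`. -/
def MinV {n : ℕ} (π : Profile n) : Vertex n :=
  fun i => decide (2 * cnt π i < π.1.length)

/-- The Condorcet score `Cs(π)`. -/
def Cs {n : ℕ} (π : Profile n) : ℕ :=
  (Finset.univ.filter (fun i : Fin n => 2 * cnt π i = π.1.length)).card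

/-- The Majority property (Maj). -/
def MajProp {n : ℕ} (f : Profile n → Set (Vertex n)) : Prop :=
  ∀ π : Profile n, Maj π ∈ f π

/-- The Minority property (Min). -/
def MinProp {n : ℕ} (f : Profile n → Set (Vertex n)) : Prop :=
  ∀ π : Profile n, MinV π ∈ f π

/-- The Restricted Range property (RR): `|f(π)| ≤ 2^{Cs(π)}`. -/
def RestrictedRange {n : ℕ} (f : Profile n → Set (Vertex n)) : Prop :=
  ∀ π : Profile n, (f π).ncard ≤ 2 ^ Cs π

/-- The `ℓ_p` status `ℓ_pS_π(x) = Σ_j d(x,x_j)^p`. -/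
noncomputable def lpStatus {n : ℕ} (p : ℝ) (π : Profile n) (x : Vertex n) : ℝ :=
  (π.1.map (fun y => (cubeDist x y : ℝ) ^ p)).sum

/-- The `ℓ_p`-function. -/
noncomputable def lpFun {n : ℕ} (p : ℝ) (π : Profile n) : Set (Vertex n) :=
  {x | ∀ y : Vertex n, lpStatus p π x ≤ lpStatus p π y}

/-- The `p`-Characteristic `Char_p(π) = Σ_j ‖x_j‖^p`. -/
noncomputable def Charp {n : ℕ} (p : ℝ) (π : Profile n) : ℝ :=
  (π.1.map (fun x => (vnorm x : ℝ) ^ p)).sum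

/-- Concatenation of profiles `π₁π₂`. -/
def pconcat {n : ℕ} (π₁ π₂ : Profile n) : Profile n :=
  ⟨π₁.1 ++ π₂.1, by simp [π₁.2]⟩

/-- The profile of length one consisting of the single vertex `x`. -/
def singleP {n : ℕ} (x : Vertex n) : Profile n := ⟨[x], by simp⟩

/-- The Consistency property (C). -/
def Consistency {n : ℕ} (f : Profile n → Set (Vertex n)) : Prop :=
  ∀ π₁ π₂ : Profile n, (f π₁ ∩ f π₂).Nonempty → f (pconcat π₁ π₂) = f π₁ ∩ f π₂

section Aux
variable {n : ℕ}

def colS (l : List (Vertex n)) (i : Fin n) (b : Bool) : ℕ :=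
  (l.map fun y => if b = y i then 0 else 1).sum

lemma colS_cons (y : Vertex n) (l : List (Vertex n)) (i : Fin n) (b : Bool) :
    colS (y :: l) i b = (if b = y i then 0 else 1) + colS l i b := by
  simp [colS]

lemma colS_add (l : List (Vertex n)) (i : Fin n) :
    colS l i true + colS l i false = l.length := by
  induction l with
  | nil => simp [colS]
  | cons y l ih =>
    rw [colS_cons, colS_cons, List.length_cons]
    cases h : y i <;> simp [h] <;> omega

lemma colS_false (π : Profile n) (i : Fin n) : colS π.1 i false = cnt π i := by
  unfold colS cnt
  congr 1
  apply List.map_congr_left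
  intro y _
  cases h : y i <;> simp [h]

lemma hamming_sum (x y : Vertex n) :
    cubeDist x y = ∑ i, if x i = y i then 0 else 1 := by
  unfold cubeDist hammingDist
  rw [Finset.card_filter]
  apply Finset.sum_congr rfl
  intro i _
  by_cases h : x i = y i <;> simp [h]

lemma status_eq (π : Profile n) (x : Vertex n) :
    status π x = ∑ i, colS π.1 i (x i) := by
  unfold status
  induction π.1 with
  | nil => simp [colS]
  | cons y l ih =>
    simp only [List.map_cons, List.sum_cons, ih]
    rw [hamming_sum, ← Finset.sum_add_distrib]
    apply Finset.sum_congr rfl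
    intro i _
    rw [colS_cons]

lemma mem_AM_iff (π : Profile n) (x : Vertex n) :
    x ∈ AM π ↔ ∀ (i : Fin n) (b : Bool), colS π.1 i b ≤ colS π.1 i (x i) := by
  constructor
  · intro hx i b
    have key : ∀ z : Vertex n, status π z
        = colS π.1 i (z i) + ∑ j ∈ Finset.univ.erase i, colS π.1 j (z j) := by
      intro z
      rw [status_eq]
      exact (Finset.add_sum_erase _ _ (Finset.mem_univ i)).symm
    have h := hx (Function.update x i b)
    rw [key, key] at h
    have heq : ∑ j ∈ Finset.univ.erase i, colS π.1 j (Function.update x i b j)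
        = ∑ j ∈ Finset.univ.erase i, colS π.1 j (x j) := by
      apply Finset.sum_congr rfl
      intro j hj
      rw [Function.update_of_ne (Finset.ne_of_mem_erase hj)]
    rw [heq, Function.update_self] at h
    omega
  · intro h y
    rw [status_eq, status_eq]
    exact Finset.sum_le_sum fun i _ => h i (y i)

lemma colS_le_min (π : Profile n) (i : Fin n) (b : Bool) :
    colS π.1 i b ≤ colS π.1 i (MinV π i) := by
  have h1 := colS_add π.1 i
  have h2 := colS_false π i
  unfold MinV
  by_cases h : 2 * cnt π i < π.1.length <;> cases b <;> simp [h] <;> omega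

lemma minV_mem_AM (π : Profile n) : MinV π ∈ AM π :=
  (mem_AM_iff π (MinV π)).2 fun i b => colS_le_min π i b

lemma mem_AM_iff' (π : Profile n) (x : Vertex n) :
    x ∈ AM π ↔ ∀ i : Fin n, 2 * cnt π i ≠ π.1.length → x i = MinV π i := by
  rw [mem_AM_iff]
  constructor
  · intro h i hne
    by_cases hx : x i = MinV π i
    · exact hx
    have h1 := h i (MinV π i)
    have h2 := colS_le_min π i (x i)
    have e : colS π.1 i (x i) = colS π.1 i (MinV π i) := le_antisymm h2 h1
    have e2 : colS π.1 i true = colS π.1 i false := by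
      cases hxi : x i <;> cases hm : MinV π i <;> simp [hxi, hm] at hx e ⊢ <;> omega
    have h3 := colS_add π.1 i
    have h4 := colS_false π i
    omega
  · intro h i b
    by_cases hne : 2 * cnt π i = π.1.length
    · have h3 := colS_add π.1 i
      have h4 := colS_false π i
      have e2 : colS π.1 i true = colS π.1 i false := by omega
      cases b <;> cases hx : x i <;> simp [e2]
    · rw [h i hne]
      exact colS_le_min π i b
end Aux

section Aux2
variable {n : ℕ}

lemma vxor_vxor (x v : Vertex n) : vxor (vxor x v) v = x := by
  funext i
  simp [vxor]

lemma vxor_zero (u : Vertex n) : vxor (zeroV n) u = u := by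
  funext i
  simp [vxor, zeroV]

lemma pxor_pxor (π : Profile n) (v : Vertex n) : pxor (pxor π v) v = π := by
  apply Subtype.ext
  simp only [pxor, List.map_map]
  have : ((fun x => vxor x v) ∘ fun x => vxor x v) = id := by
    funext x
    simp [Function.comp, vxor_vxor]
  rw [this, List.map_id]

lemma cubeDist_vxor (u v w : Vertex n) :
    cubeDist (vxor u w) (vxor v w) = cubeDist u v := by
  unfold cubeDist hammingDist
  congr 1
  apply Finset.filter_congr
  intro i _
  cases hu : u i <;> cases hv : v i <;> cases hw : w i <;> simp [vxor, hu, hv, hw]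

lemma status_pxor (π : Profile n) (v y : Vertex n) :
    status (pxor π v) y = status π (vxor y v) := by
  unfold status pxor
  simp only [List.map_map]
  congr 1
  apply List.map_congr_left
  intro x _
  simp only [Function.comp]
  rw [← cubeDist_vxor (vxor y v) x v, vxor_vxor]

lemma AM_translation : Translation (AM (n := n)) := by
  intro π u v hu y
  rw [status_pxor, status_pxor, vxor_vxor]
  exact hu (vxor y v)

lemma length_pxor (π : Profile n) (u : Vertex n) : (pxor π u).1.length = π.1.length := by
  simp [pxor]

lemma cnt_pxor (π : Profile n) (u : Vertex n) (i : Fin n) :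
    cnt (pxor π u) i = colS π.1 i (u i) := by
  unfold cnt pxor colS
  simp only [List.map_map]
  congr 1
  apply List.map_congr_left
  intro y _
  simp only [Function.comp]
  cases hy : y i <;> cases hu : u i <;> simp [vxor, hy, hu]

lemma MinV_pxor_of_AM (π : Profile n) (u : Vertex n) (hu : u ∈ AM π) :
    MinV (pxor π u) = zeroV n := by
  funext i
  have h := (mem_AM_iff π u).1 hu i (!(u i))
  have h2 := colS_add π.1 i
  have h3 : 2 * colS π.1 i (u i) ≥ π.1.length := by
    cases hui : u i <;> rw [hui] at h <;> simp at h <;> omega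
  simp only [MinV, zeroV, cnt_pxor, length_pxor, decide_eq_false_iff_not, not_lt]
  omega

end Aux2

section Aux3
variable {n : ℕ}

lemma ncard_forced (P : Fin n → Prop) [DecidablePred P] (m : Vertex n) :
    {x : Vertex n | ∀ i, P i → x i = m i}.ncard
      = 2 ^ (Finset.univ.filter fun i => ¬ P i).card := by
  have e : {x : Vertex n // ∀ i, P i → x i = m i} ≃ ({i : Fin n // ¬ P i} → Bool) :=
    { toFun := fun x i => x.1 i.1
      invFun := fun b => ⟨fun i => if h : P i then m i else b ⟨i, h⟩,
        fun i hi => by simp [hi]⟩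
      left_inv := by
        intro x
        apply Subtype.ext
        funext i
        by_cases h : P i
        · simp [h, x.2 i h]
        · simp [h]
      right_inv := by
        intro b
        funext i
        simp [i.2] }
  rw [← Nat.card_coe_set_eq]
  have h1 : Nat.card ↑{x : Vertex n | ∀ i, P i → x i = m i}
      = Nat.card ({i : Fin n // ¬ P i} → Bool) := Nat.card_congr e
  rw [h1, Nat.card_eq_fintype_card, Fintype.card_fun, Fintype.card_bool, Fintype.card_subtype]

lemma ncard_AM (π : Profile n) : (AM π).ncard = 2 ^ Cs π := by
  have hset : AM π = {x : Vertex n | ∀ i, (2 * cnt π i ≠ π.1.length) → x i = MinV π i} := by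
    ext x
    exact mem_AM_iff' π x
  rw [hset, ncard_forced]
  congr 1
  unfold Cs
  congr 1
  apply Finset.filter_congr
  intro i _
  simp

/-- `f = AM` iff `f` satisfies (T), (Min), and (RR). -/
theorem stmt17 {n : ℕ} (f : Profile n → Set (Vertex n))
    (hf : ∀ π : Profile n, (f π).Nonempty) :
    f = AM ↔ (Translation f ∧ MinProp f ∧ RestrictedRange f) := by
  constructor
  · rintro rfl
    refine ⟨AM_translation, fun π => minV_mem_AM π, fun π => ?_⟩
    rw [ncard_AM]
  · rintro ⟨hT, hM, hR⟩
    funext π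
    have hsub : AM π ⊆ f π := by
      intro u hu
      have h1 := hM (pxor π u)
      have h2 := hT (pxor π u) _ u h1
      rw [pxor_pxor, MinV_pxor_of_AM π u hu, vxor_zero] at h2
      exact h2
    have hle : (f π).ncard ≤ (AM π).ncard := by
      rw [ncard_AM]
      exact hR π
    exact (Set.eq_of_subset_of_ncard_le hsub hle (Set.toFinite _)).symm

end Aux3
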